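/- On primitive differential forms, the operators ∂₊ and ∂₋ defined by the Lefschetz decomposition of d admit the expressions ∂₊ = d - L H^{-1} Λ d and ∂₋ = H^{-1} Λ d. -/

import Mathlib

open Finset

/-- **Expressions `∂₊ = d - L H⁻¹ Λ d` and `∂₋ = H⁻¹ Λ d` on primitive forms.**
`V` models the differential forms of a symplectic manifold `(M^{2n}, ω)`: `Prj k` is the
projection onto `k`-forms, `L`, `Λ`, `H = ∑ₖ (n-k) • Prj k` the `sl(2)`-triple, and `d`
the exterior derivative (degree `+1`, commuting with `L` since `dω = 0`).  For a
primitive `s`-form `B` (`s ≤ n`), `Dp B` and `Dm B` are the primitive forms with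
`dB = Dp B + L (Dm B)` (the operators `∂₊, ∂₋`).  Then on a primitive `k`-form `B`,
since `ΛdB` has degree `k-1` where `H` acts by the invertible scalar `n-k+1`,
`∂₋ B = (n-k+1)⁻¹ • Λ(dB)` (that is, `∂₋ = H⁻¹Λd`) and
`∂₊ B = dB - (n-k+1)⁻¹ • L(Λ(dB))` (that is, `∂₊ = d - LH⁻¹Λd`). -/
theorem dplus_dminus_expressions
    (n : ℕ) (V : Type*) [AddCommGroup V] [Module ℝ V]
    (Prj : ℤ → Module.End ℝ V)
    (hsum : ∑ k ∈ Finset.Icc (0 : ℤ) (2 * n), Prj k = 1)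
    (horth : ∀ j k : ℤ, j ≠ k → Prj j * Prj k = 0)
    (hidem : ∀ k : ℤ, Prj k * Prj k = Prj k)
    (L Λ H : Module.End ℝ V)
    (hLdeg : ∀ k : ℤ, L * Prj k = Prj (k + 2) * L)
    (hΛdeg : ∀ k : ℤ, Λ * Prj k = Prj (k - 2) * Λ)
    (hH : H = ∑ k ∈ Finset.Icc (0 : ℤ) (2 * n), ((n : ℤ) - k) • Prj k)
    (sl₁ : Λ * L - L * Λ = H)
    (sl₂ : H * Λ - Λ * H = (2 : ℤ) • Λ)
    (sl₃ : H * L - L * H = (-2 : ℤ) • L)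
    (d : Module.End ℝ V)
    (hddeg : ∀ k : ℤ, d * Prj k = Prj (k + 1) * d)
    (hdL : d * L = L * d)
    (Dp Dm : Module.End ℝ V)
    (hDpDm : ∀ s : ℕ, s ≤ n → ∀ B : V, Prj s B = B → Λ B = 0 →
      (Prj ((s : ℤ) + 1) (Dp B) = Dp B ∧ Λ (Dp B) = 0) ∧
      (Prj ((s : ℤ) - 1) (Dm B) = Dm B ∧ Λ (Dm B) = 0) ∧
      d B = Dp B + L (Dm B)) :
    ∀ k : ℕ, k ≤ n → ∀ B : V, Prj k B = B → Λ B = 0 →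
      Dm B = (((n : ℝ) - k + 1))⁻¹ • Λ (d B) ∧
      Dp B = d B - (((n : ℝ) - k + 1))⁻¹ • L (Λ (d B)) := by

  intro k hk B hB hLB
  obtain ⟨⟨hDp1, hDp2⟩, ⟨hDm1, hDm2⟩, hd⟩ := hDpDm k hk B hB hLB
  have hproj : ∀ (m : ℤ) (x : V), Prj m x = x → ∀ j : ℤ, j ≠ m → Prj j x = 0 := by
    intro m x hx j hj
    calc Prj j x = (Prj j * Prj m) x := by rw [Module.End.mul_apply, hx]
    _ = 0 := by rw [horth j m hj]; rfl
  have hΛd : Λ (d B) = H (Dm B) := by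
    have h1 : (Λ * L) (Dm B) - (L * Λ) (Dm B) = H (Dm B) := by
      rw [← LinearMap.sub_apply, sl₁]
    rw [hd, map_add, hDp2, zero_add]
    have h2 : (L * Λ) (Dm B) = 0 := by
      rw [Module.End.mul_apply, hDm2, map_zero]
    rw [h2, sub_zero] at h1
    exact h1
  rcases Nat.eq_zero_or_pos k with rfl | hk0
  · have h0 : Dm B = 0 := by
      have hs := congrArg (fun f : Module.End ℝ V => f (Dm B)) hsum
      simp only [LinearMap.sum_apply, Module.End.one_apply] at hs
      rw [← hs]
      apply Finset.sum_eq_zero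
      intro j hj
      refine hproj (-1) (Dm B) (by simpa using hDm1) j ?_
      rintro rfl
      simp at hj
    constructor
    · rw [hΛd, h0, map_zero, smul_zero]
    · rw [hΛd, h0, map_zero, map_zero, smul_zero, sub_zero, hd, h0, map_zero, add_zero]
  · have hmem : (k : ℤ) - 1 ∈ Finset.Icc (0 : ℤ) (2 * n) := by
      simp only [Finset.mem_Icc]
      omega
    have hH' : H (Dm B) = ((n : ℤ) - ((k : ℤ) - 1)) • Dm B := by
      rw [hH, LinearMap.sum_apply, Finset.sum_eq_single ((k : ℤ) - 1)]
      · rw [LinearMap.smul_apply, hDm1]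
      · intro j hj hjm
        rw [LinearMap.smul_apply, hproj _ _ hDm1 j hjm, smul_zero]
      · intro h; exact absurd hmem h
    have hc : ((n : ℝ) - k + 1) ≠ 0 := by
      have : (k : ℝ) ≤ n := by exact_mod_cast hk
      linarith
    have hsm : Λ (d B) = ((n : ℝ) - k + 1) • Dm B := by
      rw [hΛd, hH', ← Int.cast_smul_eq_zsmul ℝ]
      push_cast
      ring_nf
    have hDm : Dm B = ((n : ℝ) - k + 1)⁻¹ • Λ (d B) := by
      rw [hsm, smul_smul, inv_mul_cancel₀ hc, one_smul]
    refine ⟨hDm, ?_⟩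
    have hL : ((n : ℝ) - k + 1)⁻¹ • L (Λ (d B)) = L (Dm B) := by
      rw [hDm, map_smul]
    rw [hL, hd]
    abel
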